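/- If x ∈ [0,1]^V and \tilde f_G(x) < ∞, then 𝕶_G(x) · \tilde f_G(x) = 1 (where \tilde f_G(x) is regarded as a real number). -/

import Mathlib

open scoped Classical ENNReal

set_option linter.unusedSectionVars false

variable {V : Type*} [Fintype V] [DecidableEq V]

/-- An admissible swap exchanges two consecutive letters that are adjacent in `G`. -/
def AdjSwap (G : SimpleGraph V) (w w' : List V) : Prop :=
  ∃ (a b : List V) (u v : V), G.Adj u v ∧ w = a ++ u :: v :: b ∧ w' = a ++ v :: u :: b

/-- Two words are equivalent if one can be transformed into the other by finitely many
admissible swaps. -/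
def WordEquiv (G : SimpleGraph V) : List V → List V → Prop :=
  Relation.ReflTransGen (AdjSwap G)

lemma adjSwap_symm (G : SimpleGraph V) : Symmetric (AdjSwap G) := by
  rintro w w' ⟨a, b, u, v, h, rfl, rfl⟩
  exact ⟨a, b, v, u, h.symm, rfl, rfl⟩

/-- The setoid of words modulo admissible swaps. -/
def wordSetoid (G : SimpleGraph V) : Setoid (List V) where
  r := WordEquiv G
  iseqv := ⟨fun _ => Relation.ReflTransGen.refl,
    fun h => by
      unfold WordEquiv at h ⊢
      induction h with
      | refl => exact Relation.ReflTransGen.refl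
      | tail _ hs ih => exact Relation.ReflTransGen.head (adjSwap_symm G hs) ih,
    fun h h' => Relation.ReflTransGen.trans h h'⟩

/-- A word is `G`-reduced if between any two equal letters there is a letter distinct from
them and not adjacent to them. -/
def IsGReduced (G : SimpleGraph V) (w : List V) : Prop :=
  ∀ i j : Fin w.length, i < j → w.get i = w.get j →
    ∃ k : Fin w.length, i < k ∧ k < j ∧ w.get k ≠ w.get i ∧ ¬ G.Adj (w.get k) (w.get i)

/-- The product `x_{w_1} ⋯ x_{w_ℓ}` depends only on the equivalence class of a word. -/
noncomputable def classProd (G : SimpleGraph V) (x : V → ℝ≥0∞) :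
    Quotient (wordSetoid G) → ℝ≥0∞ :=
  Quotient.lift (fun w : List V => (w.map x).prod) (by
    intro a b h
    induction h with
    | refl => rfl
    | tail _ hs ih =>
        obtain ⟨a', b', u, v, huv, rfl, rfl⟩ := hs
        rw [ih]
        simp only [List.map_append, List.prod_append, List.map_cons, List.prod_cons]
        ring)

/-- `tildeF G x` : the sum over all equivalence classes of words of `∏ x_{w_i}`,
valued in `[0,∞]`. -/
noncomputable def tildeF (G : SimpleGraph V) (x : V → ℝ) : ℝ≥0∞ :=
  ∑' c : Quotient (wordSetoid G), classProd G (fun v => ENNReal.ofReal (x v)) c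

/-- `redF G x` : the sum over all equivalence classes of `G`-reduced words of `∏ x_{w_i}`,
valued in `[0,∞]`. -/
noncomputable def redF (G : SimpleGraph V) (x : V → ℝ) : ℝ≥0∞ :=
  ∑' c : {c : Quotient (wordSetoid G) // ∃ w, IsGReduced G w ∧ Quotient.mk (wordSetoid G) w = c},
    classProd G (fun v => ENNReal.ofReal (x v)) c.1

/-- The clique polynomial `𝕶_{G,V'}(x) = ∑_{cliques K ⊆ V'} (-1)^{|K|} ∏_{v ∈ K} x_v`. -/
noncomputable def cliquePoly (G : SimpleGraph V) (V' : Finset V) (x : V → ℝ) : ℝ :=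
  ∑ K ∈ V'.powerset.filter (fun K : Finset V => G.IsClique (K : Set V)),
    (-1 : ℝ) ^ K.card * ∏ v ∈ K, x v

/-- The Euclidean norm on `ℝ^V`. -/
noncomputable def eucNorm (x : V → ℝ) : ℝ := Real.sqrt (∑ v, x v ^ 2)

/-- `min_{V' ⊆ V} 𝕶_{G,V'}(x)`. -/
noncomputable def minK (G : SimpleGraph V) (x : V → ℝ) : ℝ :=
  Finset.univ.inf' ⟨∅, Finset.mem_univ _⟩ fun V' : Finset V => cliquePoly G V' x

/-- `ρ(u) = inf {r ∈ [0,∞) : min_{V' ⊆ V} 𝕶_{G,V'}(r·u) = 0}`. -/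
noncomputable def rho (G : SimpleGraph V) (u : V → ℝ) : ℝ :=
  sInf {r : ℝ | 0 ≤ r ∧ minK G (r • u) = 0}

/-- The region `R(G) = {x ∈ [0,1]^V : 𝕶_{G,V'}(x) > 0 for all V' ⊆ V}`. -/
def regionR (G : SimpleGraph V) : Set (V → ℝ) :=
  {x | (∀ v, x v ∈ Set.Icc (0 : ℝ) 1) ∧ ∀ V' : Finset V, 0 < cliquePoly G V' x}



section CartierFoata

variable {G : SimpleGraph V}

lemma WordEquiv.symm {w w' : List V} (h : WordEquiv G w w') : WordEquiv G w' w :=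
  (wordSetoid G).iseqv.symm h

lemma WordEquiv.trans' {w₁ w₂ w₃ : List V} (h : WordEquiv G w₁ w₂) (h' : WordEquiv G w₂ w₃) :
    WordEquiv G w₁ w₃ :=
  Relation.ReflTransGen.trans h h'

lemma WordEquiv.append_left (l : List V) {w w' : List V} (h : WordEquiv G w w') :
    WordEquiv G (l ++ w) (l ++ w') := by
  refine Relation.ReflTransGen.lift (l ++ ·) ?_ _ _ h
  rintro a b ⟨c, d, u, v, huv, rfl, rfl⟩
  exact ⟨l ++ c, d, u, v, huv, by simp, by simp⟩

lemma WordEquiv.append_right (l : List V) {w w' : List V} (h : WordEquiv G w w') :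
    WordEquiv G (w ++ l) (w' ++ l) := by
  refine Relation.ReflTransGen.lift (· ++ l) ?_ _ _ h
  rintro a b ⟨c, d, u, v, huv, rfl, rfl⟩
  exact ⟨c, d ++ l, u, v, huv, by simp, by simp⟩

lemma WordEquiv.cons (v : V) {w w' : List V} (h : WordEquiv G w w') :
    WordEquiv G (v :: w) (v :: w') :=
  h.append_left [v]

lemma WordEquiv.length_eq {w w' : List V} (h : WordEquiv G w w') : w.length = w'.length := by
  induction h with
  | refl => rfl
  | tail _ hs ih =>
    obtain ⟨a, b, u, v, _, rfl, rfl⟩ := hs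
    simp at ih ⊢; omega

lemma WordEquiv.erase (v : V) {w w' : List V} (h : WordEquiv G w w') :
    WordEquiv G (w.erase v) (w'.erase v) := by
  induction h with
  | refl => exact Relation.ReflTransGen.refl
  | tail _ hs ih =>
    refine ih.trans' ?_
    obtain ⟨a, b, u, u', huv, rfl, rfl⟩ := hs
    by_cases hva : v ∈ a
    · rw [List.erase_append_left _ hva, List.erase_append_left _ hva]
      exact Relation.ReflTransGen.single ⟨a.erase v, b, u, u', huv, rfl, rfl⟩
    · rw [List.erase_append_right _ hva, List.erase_append_right _ hva]
      by_cases hu : u = v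
      · subst hu
        have hu' : u' ≠ u := fun h => G.irrefl (by rw [h] at huv; exact huv)
        rw [List.erase_cons_head, List.erase_cons_tail (by simpa using hu'),
          List.erase_cons_head]
        exact Relation.ReflTransGen.refl
      · by_cases hu' : u' = v
        · subst hu'
          rw [List.erase_cons_tail (by simpa using hu), List.erase_cons_head,
            List.erase_cons_head]
          exact Relation.ReflTransGen.refl
        · rw [List.erase_cons_tail (by simpa using hu), List.erase_cons_tail (by simpa using hu'),
            List.erase_cons_tail (by simpa using hu'), List.erase_cons_tail (by simpa using hu)]
          exact Relation.ReflTransGen.single ⟨a, b.erase v, u, u', huv, rfl, rfl⟩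

lemma wordEquiv_cancel_cons {v : V} {w w' : List V} (h : WordEquiv G (v :: w) (v :: w')) :
    WordEquiv G w w' := by
  have := h.erase v
  rwa [List.erase_cons_head, List.erase_cons_head] at this

lemma wordEquiv_cancel_append (l : List V) {w w' : List V}
    (h : WordEquiv G (l ++ w) (l ++ w')) : WordEquiv G w w' := by
  induction l with
  | nil => simpa using h
  | cons a l ih => exact ih (wordEquiv_cancel_cons h)

lemma perm_wordEquiv {l l' : List V} (hp : l.Perm l')
    (hadj : ∀ a ∈ l, ∀ b ∈ l, a ≠ b → G.Adj a b) : WordEquiv G l l' := by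
  induction hp with
  | nil => exact Relation.ReflTransGen.refl
  | cons z hperm ih =>
    exact WordEquiv.cons z (ih fun a ha b hb hab =>
      hadj a (List.mem_cons_of_mem _ ha) b (List.mem_cons_of_mem _ hb) hab)
  | swap p q l =>
    by_cases hpq : q = p
    · subst hpq; exact Relation.ReflTransGen.refl
    · exact Relation.ReflTransGen.single ⟨[], l, q, p,
        hadj q (by simp) p (by simp) hpq, rfl, rfl⟩
  | trans h₁ h₂ ih₁ ih₂ =>
    refine (ih₁ hadj).trans' (ih₂ ?_)
    intro a ha b hb hab
    exact hadj a (h₁.mem_iff.2 ha) b (h₁.mem_iff.2 hb) hab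

lemma wordEquiv_filter {u v : V} (huv : ¬ G.Adj u v) {w w' : List V}
    (h : WordEquiv G w w') :
    w.filter (fun z => decide (z = u ∨ z = v)) = w'.filter (fun z => decide (z = u ∨ z = v)) := by
  induction h with
  | refl => rfl
  | tail _ hs ih =>
    rw [ih]
    obtain ⟨a, b, p, q, hpq, rfl, rfl⟩ := hs
    simp only [List.filter_append, List.filter_cons]
    congr 1
    by_cases hp : p = u ∨ p = v <;> by_cases hq : q = u ∨ q = v
    · exfalso
      have hne : p ≠ q := hpq.ne
      rcases hp with rfl | rfl <;> rcases hq with rfl | rfl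
      · exact hne rfl
      · exact huv hpq
      · exact huv hpq.symm
      · exact hne rfl
    · simp [hp, hq]
    · simp [hp, hq]
    · simp [hp, hq]

end CartierFoata

section CartierFoata2

variable {G : SimpleGraph V}

/-- The set of initial letters of a trace. -/
noncomputable def initSet (G : SimpleGraph V) (t : Quotient (wordSetoid G)) : Finset V :=
  Finset.univ.filter fun v => ∃ w, Quotient.mk (wordSetoid G) (v :: w) = t

lemma mem_initSet {t : Quotient (wordSetoid G)} {v : V} :
    v ∈ initSet G t ↔ ∃ w, Quotient.mk (wordSetoid G) (v :: w) = t := by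
  simp [initSet]

lemma initSet_clique (t : Quotient (wordSetoid G)) : G.IsClique (initSet G t : Set V) := by
  intro u hu v hv huv
  by_contra hadj
  obtain ⟨w₁, h₁⟩ := mem_initSet.1 (Finset.mem_coe.1 hu)
  obtain ⟨w₂, h₂⟩ := mem_initSet.1 (Finset.mem_coe.1 hv)
  have h : WordEquiv G (u :: w₁) (v :: w₂) := Quotient.exact (h₁.trans h₂.symm)
  have hfil := wordEquiv_filter hadj h
  simp only [List.filter_cons] at hfil
  rw [if_pos (by simp), if_pos (by simp)] at hfil
  exact huv (List.head_eq_of_cons_eq hfil)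

lemma pull_out {v : V} {w : List V}
    (h : v ∈ initSet G (Quotient.mk (wordSetoid G) w)) :
    WordEquiv G w (v :: w.erase v) := by
  obtain ⟨w', hw'⟩ := mem_initSet.1 h
  have h2 : WordEquiv G (v :: w') w := Quotient.exact hw'
  have h3 := h2.erase v
  rw [List.erase_cons_head] at h3
  exact h2.symm.trans' (h3.cons v)

lemma pull_list (l : List V) (hnd : l.Nodup)
    (hadj : ∀ a ∈ l, ∀ b ∈ l, a ≠ b → G.Adj a b) (w : List V)
    (hmem : ∀ v ∈ l, v ∈ initSet G (Quotient.mk (wordSetoid G) w)) :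
    ∃ w', WordEquiv G w (l ++ w') := by
  induction l generalizing w with
  | nil => exact ⟨w, Relation.ReflTransGen.refl⟩
  | cons v l ih =>
    have hvl : v ∉ l := (List.nodup_cons.1 hnd).1
    have h1 : WordEquiv G w (v :: w.erase v) := pull_out (hmem v List.mem_cons_self)
    have hmem' : ∀ u ∈ l, u ∈ initSet G (Quotient.mk (wordSetoid G) (w.erase v)) := by
      intro u hu
      have hne : u ≠ v := fun h => hvl (h ▸ hu)
      obtain ⟨w₁, hw₁⟩ := mem_initSet.1 (hmem u (List.mem_cons_of_mem _ hu))
      have h2 : WordEquiv G (u :: w₁) w := Quotient.exact hw₁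
      have h3 := h2.erase v
      rw [List.erase_cons_tail (by simpa using hne)] at h3
      exact mem_initSet.2 ⟨w₁.erase v, Quotient.sound h3⟩
    obtain ⟨w', hw'⟩ := ih (List.nodup_cons.1 hnd).2
      (fun a ha b hb hab =>
        hadj a (List.mem_cons_of_mem _ ha) b (List.mem_cons_of_mem _ hb) hab)
      (w.erase v) hmem'
    exact ⟨w', h1.trans' (hw'.cons v)⟩

lemma push_in {l : List V} (hadj : ∀ a ∈ l, ∀ b ∈ l, a ≠ b → G.Adj a b) {v : V}
    (hv : v ∈ l) (w : List V) :
    v ∈ initSet G (Quotient.mk (wordSetoid G) (l ++ w)) := by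
  refine mem_initSet.2 ⟨l.erase v ++ w, Quotient.sound ?_⟩
  have h1 : WordEquiv G l (v :: l.erase v) := perm_wordEquiv (List.perm_cons_erase hv) hadj
  exact (h1.append_right w).symm

/-- Left multiplication by a word on traces. -/
noncomputable def mulWord (G : SimpleGraph V) (l : List V) :
    Quotient (wordSetoid G) → Quotient (wordSetoid G) :=
  Quotient.map (l ++ ·) fun _ _ h => WordEquiv.append_left l h

lemma mulWord_mk (l w : List V) :
    mulWord G l (Quotient.mk (wordSetoid G) w) = Quotient.mk (wordSetoid G) (l ++ w) := rfl

lemma mulWord_injective (l : List V) : Function.Injective (mulWord G l) := by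
  intro c c'
  induction c using Quotient.ind with | _ w =>
  induction c' using Quotient.ind with | _ w' =>
  intro h
  exact Quotient.sound (wordEquiv_cancel_append l (Quotient.exact h))

lemma clique_pairwise {K : Finset V} (hK : G.IsClique (K : Set V)) :
    ∀ a ∈ K.toList, ∀ b ∈ K.toList, a ≠ b → G.Adj a b := by
  intro a ha b hb hab
  exact hK (Finset.mem_coe.2 (Finset.mem_toList.1 ha)) (Finset.mem_coe.2 (Finset.mem_toList.1 hb)) hab

lemma mem_range_mulWord {K : Finset V} (hK : G.IsClique (K : Set V))
    (t : Quotient (wordSetoid G)) :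
    (∃ c, mulWord G K.toList c = t) ↔ ∀ v ∈ K, v ∈ initSet G t := by
  constructor
  · rintro ⟨c, rfl⟩
    induction c using Quotient.ind with | _ w =>
    intro v hv
    exact push_in (clique_pairwise hK) (Finset.mem_toList.2 hv) w
  · induction t using Quotient.ind with | _ w =>
    intro h
    obtain ⟨w', hw'⟩ := pull_list K.toList K.nodup_toList (clique_pairwise hK) w
      (fun v hv => h v (Finset.mem_toList.1 hv))
    exact ⟨Quotient.mk (wordSetoid G) w', Quotient.sound hw'.symm⟩

lemma initSet_eq_empty_iff (t : Quotient (wordSetoid G)) :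
    initSet G t = ∅ ↔ t = Quotient.mk (wordSetoid G) [] := by
  induction t using Quotient.ind with | _ w =>
  constructor
  · intro h
    cases w with
    | nil => rfl
    | cons v r =>
            exact absurd (mem_initSet.2 ⟨r, rfl⟩) (by rw [h]; exact Finset.notMem_empty v)
  · intro h
    rw [Finset.eq_empty_iff_forall_notMem]
    intro v hv
    obtain ⟨w', hw'⟩ := mem_initSet.1 hv
    have := (Quotient.exact (hw'.trans h) : WordEquiv G (v :: w') []).length_eq
    simp at this

end CartierFoata2

lemma sum_pow_neg_one_real {α : Type*} [DecidableEq α] (s : Finset α) :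
    (∑ K ∈ s.powerset, (-1 : ℝ) ^ K.card) = if s = ∅ then 1 else 0 := by
  have h := congrArg (fun z : ℤ => (z : ℝ)) (Finset.sum_powerset_neg_one_pow_card (x := s))
  push_cast at h
  simpa using h

/-- if `x ∈ [0,1]^V` and `tildeF G x < ∞`, then `𝕶_G(x) · tildeF G x = 1`. -/
theorem cliquePoly_mul_tildeF (G : SimpleGraph V) (x : V → ℝ)
    (hx : ∀ v, x v ∈ Set.Icc (0 : ℝ) 1) (hfin : tildeF G x < ⊤) :
    cliquePoly G Finset.univ x * (tildeF G x).toReal = 1 := by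
  classical
  set y : V → ℝ≥0∞ := fun v => ENNReal.ofReal (x v) with hy
  have hyne : ∀ w : List V, (w.map y).prod ≠ ⊤ := by
    intro w
    induction w with
    | nil => simp
    | cons a w ih =>
      simp only [List.map_cons, List.prod_cons]
      exact ENNReal.mul_ne_top (by simp [hy]) ih
  have hfne : ∀ c : Quotient (wordSetoid G), classProd G y c ≠ ⊤ := by
    intro c
    induction c using Quotient.ind with | _ w => exact hyne w
  set f : Quotient (wordSetoid G) → ℝ := fun c => (classProd G y c).toReal with hf
  have hfnonneg : ∀ c, 0 ≤ f c := fun c => ENNReal.toReal_nonneg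
  have htf : tildeF G x = ∑' c, classProd G y c := rfl
  have hsum : Summable f := ENNReal.summable_toReal (htf ▸ hfin.ne)
  have htoReal : (tildeF G x).toReal = ∑' c, f c := by
    rw [htf, ENNReal.tsum_toReal_eq hfne]
  set CL : Finset (Finset V) :=
    Finset.univ.powerset.filter (fun K : Finset V => G.IsClique (K : Set V)) with hCL
  have hCLclique : ∀ K ∈ CL, G.IsClique (K : Set V) := by
    intro K hK; exact (Finset.mem_filter.1 hK).2
  set g : Finset V → Quotient (wordSetoid G) → ℝ :=
    fun K t => if ∃ c, mulWord G K.toList c = t then f t else 0 with hg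
  have hgle : ∀ K t, g K t ≤ f t := by
    intro K t
    rw [hg]; dsimp only
    split
    · exact le_rfl
    · exact hfnonneg t
  have hgnonneg : ∀ K t, 0 ≤ g K t := by
    intro K t
    rw [hg]; dsimp only
    split
    · exact hfnonneg t
    · exact le_rfl
  have hgsum : ∀ K : Finset V, Summable (fun t => ((-1 : ℝ)) ^ K.card * g K t) := by
    intro K
    exact (Summable.of_nonneg_of_le (hgnonneg K) (hgle K) hsum).mul_left _
  have key : ∀ t, (∑ K ∈ CL, (-1 : ℝ) ^ K.card * g K t)
      = if t = Quotient.mk (wordSetoid G) [] then f t else 0 := by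
    intro t
    have hI : G.IsClique ((initSet G t : Finset V) : Set V) := initSet_clique t
    have hfilter : CL.filter (fun K => K ⊆ initSet G t) = (initSet G t).powerset := by
      ext K
      simp only [Finset.mem_filter, Finset.mem_powerset, hCL, Finset.mem_univ,
        Finset.mem_powerset, Finset.subset_univ, true_and]
      constructor
      · exact fun h => h.2
      · intro h
        exact ⟨hI.subset (by exact_mod_cast h), h⟩
    calc ∑ K ∈ CL, (-1 : ℝ) ^ K.card * g K t
        = ∑ K ∈ CL, (if K ⊆ initSet G t then (-1 : ℝ) ^ K.card * f t else 0) := by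
          refine Finset.sum_congr rfl fun K hK => ?_
          have hiff : (∃ c, mulWord G K.toList c = t) ↔ K ⊆ initSet G t := by
            rw [mem_range_mulWord (hCLclique K hK)]
            exact ⟨fun h v hv => h v hv, fun h v hv => h hv⟩
          rw [hg]; dsimp only
          by_cases h : K ⊆ initSet G t
          · rw [if_pos h, if_pos (hiff.2 h)]
          · rw [if_neg h, if_neg (fun hc => h (hiff.1 hc)), mul_zero]
      _ = ∑ K ∈ (initSet G t).powerset, (-1 : ℝ) ^ K.card * f t := by
          rw [← Finset.sum_filter, hfilter]
      _ = (∑ K ∈ (initSet G t).powerset, (-1 : ℝ) ^ K.card) * f t := by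
          rw [Finset.sum_mul]
      _ = (if initSet G t = ∅ then 1 else 0) * f t := by
          rw [sum_pow_neg_one_real]
      _ = if t = Quotient.mk (wordSetoid G) [] then f t else 0 := by
          by_cases ht : t = Quotient.mk (wordSetoid G) []
          · rw [if_pos ht, if_pos ((initSet_eq_empty_iff t).2 ht), one_mul]
          · rw [if_neg ht, if_neg (fun h => ht ((initSet_eq_empty_iff t).1 h)), zero_mul]
  have hprodK : ∀ K : Finset V, (K.toList.map y).prod.toReal = ∏ v ∈ K, x v := by
    intro K
    rw [Finset.prod_map_toList, ENNReal.toReal_prod]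
    exact Finset.prod_congr rfl fun v _ => ENNReal.toReal_ofReal (hx v).1
  have hcp : cliquePoly G Finset.univ x = ∑ K ∈ CL, (-1 : ℝ) ^ K.card * ∏ v ∈ K, x v := rfl
  calc cliquePoly G Finset.univ x * (tildeF G x).toReal
      = ∑ K ∈ CL, ((-1 : ℝ) ^ K.card * ∏ v ∈ K, x v) * ∑' c, f c := by
        rw [htoReal, hcp, Finset.sum_mul]
    _ = ∑ K ∈ CL, ∑' c, (-1 : ℝ) ^ K.card * g K (mulWord G K.toList c) := by
        refine Finset.sum_congr rfl fun K hK => ?_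
        rw [← tsum_mul_left]
        refine tsum_congr fun c => ?_
        have h1 : g K (mulWord G K.toList c) = f (mulWord G K.toList c) := if_pos ⟨c, rfl⟩
        have h2 : f (mulWord G K.toList c) = (∏ v ∈ K, x v) * f c := by
          induction c using Quotient.ind with | _ w =>
          show ((K.toList ++ w).map y).prod.toReal = _
          rw [List.map_append, List.prod_append, ENNReal.toReal_mul, hprodK]
          rfl
        rw [h1, h2]; ring
    _ = ∑ K ∈ CL, ∑' t, (-1 : ℝ) ^ K.card * g K t := by
        refine Finset.sum_congr rfl fun K _ => ?_
        refine Function.Injective.tsum_eq (g := mulWord G K.toList)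
          (f := fun t => (-1 : ℝ) ^ K.card * g K t) (mulWord_injective K.toList) ?_
        intro t ht
        by_contra hr
        apply ht
        have hgz : g K t = 0 := if_neg (fun h => hr (Set.mem_range.2 h))
        simp [hgz]
    _ = ∑' t, ∑ K ∈ CL, (-1 : ℝ) ^ K.card * g K t := (Summable.tsum_finsetSum fun K _ => hgsum K).symm
    _ = ∑' t, (if t = Quotient.mk (wordSetoid G) [] then f t else 0) := tsum_congr key
    _ = 1 := by
        rw [tsum_eq_single (Quotient.mk (wordSetoid G) []) (fun b hb => if_neg hb), if_pos rfl]
        show ((([] : List V).map y).prod).toReal = 1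
        simp
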